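/- Let γ : ℝ → ℝ² be a smooth closed immersed plane curve parametrized by arc-length with period L > 0, with winding number ω (i.e. ∫_γ k ds = 2ωπ), and suppose m = sup_{x∈ℝ²} #{ s ∈ [0,L) : γ(s) = x } is finite. Then K_osc(γ) ≥ 16m² − 4ω²π². -/

import Mathlib

open Real MeasureTheory
open scoped ENNReal

noncomputable section

/-- Euclidean dot product on `ℝ × ℝ`. -/
def dotp (v w : ℝ × ℝ) : ℝ := v.1 * w.1 + v.2 * w.2

/-- Rotation of a vector by `π/2`. -/
def perp (v : ℝ × ℝ) : ℝ × ℝ := (-v.2, v.1)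

/-- Unit normal of an arc-length parametrised curve: the unit tangent rotated by `π/2`. -/
def sNu (γ : ℝ → ℝ × ℝ) : ℝ → ℝ × ℝ := fun s => perp (deriv γ s)

/-- Curvature `k = ⟨γ_ss, ν⟩` of an arc-length parametrised plane curve. -/
def sCurv (γ : ℝ → ℝ × ℝ) : ℝ → ℝ := fun s => dotp (deriv (deriv γ) s) (sNu γ s)

open intervalIntegral

/-- Cauchy–Schwarz for interval integrals of a continuous function. -/
lemma cs_int (f : ℝ → ℝ) (hf : Continuous f) {a b : ℝ} (hab : a ≤ b) :
    (∫ x in a..b, f x)^2 ≤ (b - a) * ∫ x in a..b, (f x)^2 := by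
  set G : ℝ → ℝ := fun t => ∫ x in a..t, f x with hG
  set H : ℝ → ℝ := fun t => ∫ x in a..t, (f x)^2 with hH
  set F : ℝ → ℝ := fun t => (t - a) * H t - (G t)^2 with hF
  have hfi : ∀ u v : ℝ, IntervalIntegrable f volume u v := fun u v => hf.intervalIntegrable u v
  have hf2i : ∀ u v : ℝ, IntervalIntegrable (fun x => (f x)^2) volume u v :=
    fun u v => (hf.pow 2).intervalIntegrable u v
  have hGd : ∀ t : ℝ, HasDerivAt G (f t) t := fun t =>
    integral_hasDerivAt_right (hfi a t)
      (hf.stronglyMeasurable.stronglyMeasurableAtFilter) hf.continuousAt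
  have hHd : ∀ t : ℝ, HasDerivAt H ((f t)^2) t := fun t =>
    integral_hasDerivAt_right (hf2i a t)
      ((hf.pow 2).stronglyMeasurable.stronglyMeasurableAtFilter) (hf.pow 2).continuousAt
  have hFd : ∀ t : ℝ, HasDerivAt F (H t + (t - a) * (f t)^2 - 2 * G t * f t) t := by
    intro t
    have h1 : HasDerivAt (fun t => (t - a) * H t) (1 * H t + (t - a) * (f t)^2) t :=
      ((hasDerivAt_id t).sub_const a).mul (hHd t)
    have h2 : HasDerivAt (fun t => (G t)^2) (2 * G t * f t) t := by
      simpa [mul_comm, mul_assoc] using ((hGd t).fun_pow 2)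
    simpa [one_mul] using h1.fun_sub h2
  have key : ∀ t, a ≤ t → 0 ≤ H t + (t - a) * (f t)^2 - 2 * G t * f t := by
    intro t hat
    have h0 : (0:ℝ) ≤ ∫ x in a..t, (f x - f t)^2 :=
      integral_nonneg hat (fun x _ => sq_nonneg _)
    have hexp : (∫ x in a..t, (f x - f t)^2)
        = H t - 2 * f t * G t + (t - a) * (f t)^2 := by
      have h3 : ∀ x, (f x - f t)^2 = ((f x)^2 - 2 * f t * f x) + (f t)^2 := by intro x; ring
      simp_rw [h3]
      rw [integral_add ((hf2i a t).sub ((hfi a t).const_mul _)) intervalIntegrable_const,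
        integral_sub (hf2i a t) ((hfi a t).const_mul _), intervalIntegral.integral_const_mul, intervalIntegral.integral_const]
      simp only [smul_eq_mul, hH, hG]
    nlinarith [h0]
  have hFdiff : Differentiable ℝ F := fun t => (hFd t).differentiableAt
  have hmono : MonotoneOn F (Set.Icc a b) := by
    apply monotoneOn_of_deriv_nonneg (convex_Icc a b) hFdiff.continuous.continuousOn
      (hFdiff.differentiableOn.mono interior_subset)
    intro t ht
    rw [interior_Icc] at ht
    rw [(hFd t).deriv]
    exact key t ht.1.le
  have hFa : F a = 0 := by simp [hF, hG]
  have := hmono (Set.left_mem_Icc.2 hab) (Set.right_mem_Icc.2 hab) hab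
  rw [hFa] at this
  simp only [hF] at this
  linarith

lemma hasDerivAt_fst {f : ℝ → ℝ × ℝ} {v : ℝ × ℝ} {s : ℝ} (h : HasDerivAt f v s) :
    HasDerivAt (fun t => (f t).1) v.1 s := by
  have := (ContinuousLinearMap.fst ℝ ℝ ℝ).hasFDerivAt.comp_hasDerivAt s h
  simpa [Function.comp_def] using this

lemma hasDerivAt_snd {f : ℝ → ℝ × ℝ} {v : ℝ × ℝ} {s : ℝ} (h : HasDerivAt f v s) :
    HasDerivAt (fun t => (f t).2) v.2 s := by
  have := (ContinuousLinearMap.snd ℝ ℝ ℝ).hasFDerivAt.comp_hasDerivAt s h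
  simpa [Function.comp_def] using this

/-- FTC for first component of a vector-valued function. -/
lemma ftc_fst (f : ℝ → ℝ × ℝ) (hd : Differentiable ℝ f) (hc : Continuous (deriv f))
    (a b : ℝ) : ∫ s in a..b, (deriv f s).1 = (f b).1 - (f a).1 := by
  apply intervalIntegral.integral_eq_sub_of_hasDerivAt
  · exact fun x _ => hasDerivAt_fst (hd x).hasDerivAt
  · exact (continuous_fst.comp hc).intervalIntegrable a b

lemma ftc_snd (f : ℝ → ℝ × ℝ) (hd : Differentiable ℝ f) (hc : Continuous (deriv f))
    (a b : ℝ) : ∫ s in a..b, (deriv f s).2 = (f b).2 - (f a).2 := by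
  apply intervalIntegral.integral_eq_sub_of_hasDerivAt
  · exact fun x _ => hasDerivAt_snd (hd x).hasDerivAt
  · exact (continuous_snd.comp hc).intervalIntegrable a b

section basic
variable {γ : ℝ → ℝ × ℝ} (hsmooth : ContDiff ℝ (⊤ : ℕ∞) γ)

lemma smooth_tau (hsmooth : ContDiff ℝ (⊤ : ℕ∞) γ) :
    Differentiable ℝ γ ∧ Differentiable ℝ (deriv γ) ∧ Continuous (deriv γ)
      ∧ Continuous (deriv (deriv γ)) := by
  rw [show ((⊤ : ℕ∞) : ℕ∞) = (⊤ : ℕ∞) from rfl, contDiff_infty_iff_deriv] at hsmooth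
  obtain ⟨h1, h2⟩ := hsmooth
  rw [contDiff_infty_iff_deriv] at h2
  obtain ⟨h3, h4⟩ := h2
  exact ⟨h1, h3, h3.continuous, h4.continuous⟩

lemma curv_continuous (hsmooth : ContDiff ℝ (⊤ : ℕ∞) γ) : Continuous (sCurv γ) := by
  obtain ⟨h1, h2, h3, h4⟩ := smooth_tau hsmooth
  unfold sCurv sNu dotp perp
  fun_prop

lemma tau_orth (hsmooth : ContDiff ℝ (⊤ : ℕ∞) γ)
    (harc : ∀ s, dotp (deriv γ s) (deriv γ s) = 1) (s : ℝ) :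
    dotp (deriv (deriv γ) s) (deriv γ s) = 0 := by
  obtain ⟨h1, h2, h3, h4⟩ := smooth_tau hsmooth
  set τ := deriv γ
  set A := deriv τ
  have hτd : HasDerivAt τ (A s) s := (h2 s).hasDerivAt
  have h1' : HasDerivAt (fun t => (τ t).1) (A s).1 s := by
    have := (ContinuousLinearMap.fst ℝ ℝ ℝ).hasFDerivAt.comp_hasDerivAt s hτd
    simpa [Function.comp_def] using this
  have h2' : HasDerivAt (fun t => (τ t).2) (A s).2 s := by
    have := (ContinuousLinearMap.snd ℝ ℝ ℝ).hasFDerivAt.comp_hasDerivAt s hτd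
    simpa [Function.comp_def] using this
  have hg : HasDerivAt (fun t => (τ t).1 * (τ t).1 + (τ t).2 * (τ t).2)
      ((A s).1 * (τ s).1 + (τ s).1 * (A s).1 + ((A s).2 * (τ s).2 + (τ s).2 * (A s).2)) s :=
    (h1'.mul h1').add (h2'.mul h2')
  have hgc : (fun t => (τ t).1 * (τ t).1 + (τ t).2 * (τ t).2) = fun _ => (1:ℝ) := by
    funext t; exact harc t
  rw [hgc] at hg
  have := hg.deriv
  rw [deriv_const] at this
  unfold dotp
  nlinarith [this]

lemma curv_norm_sq (hsmooth : ContDiff ℝ (⊤ : ℕ∞) γ)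
    (harc : ∀ s, dotp (deriv γ s) (deriv γ s) = 1) (s : ℝ) :
    dotp (deriv (deriv γ) s) (deriv (deriv γ) s) = (sCurv γ s)^2 := by
  have horth := tau_orth hsmooth harc s
  have hunit := harc s
  unfold sCurv sNu dotp perp at *
  simp only [Prod.fst, Prod.snd] at *
  nlinarith [horth, hunit]

end basic

/-- The loop inequality: a smooth arc-length loop has `ℓ ∫ k² ≥ 16`. -/
lemma loop_ineq (γ : ℝ → ℝ × ℝ) (hsmooth : ContDiff ℝ (⊤ : ℕ∞) γ)
    (harc : ∀ s, dotp (deriv γ s) (deriv γ s) = 1)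
    {a b : ℝ} (hab : a < b) (hloop : γ a = γ b) :
    16 ≤ (b - a) * ∫ s in a..b, (sCurv γ s)^2 := by
  obtain ⟨hγd, hτd, hτc, hAc⟩ := smooth_tau hsmooth
  set τ := deriv γ with hτ
  set A := deriv τ with hA
  set M := (a + b) / 2 with hM
  set k2 : ℝ → ℝ := fun s => (sCurv γ s)^2 with hk2
  have hk2c : Continuous k2 := (curv_continuous hsmooth).pow 2
  have hk2i : ∀ u v : ℝ, IntervalIntegrable k2 volume u v := fun u v => hk2c.intervalIntegrable u v
  have hk2nn : ∀ s, 0 ≤ k2 s := fun s => sq_nonneg _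
  have hA1c : Continuous fun s => (A s).1 := continuous_fst.comp hAc
  have hA2c : Continuous fun s => (A s).2 := continuous_snd.comp hAc
  have haM : a ≤ M := by simp only [hM]; linarith
  have hMb : M ≤ b := by simp only [hM]; linarith
  set Em := ∫ s in a..M, k2 s with hEm
  set Ep := ∫ s in M..b, k2 s with hEp
  have hEsplit : (∫ s in a..b, k2 s) = Em + Ep :=
    (integral_add_adjacent_intervals (hk2i a M) (hk2i M b)).symm
  -- norm of A squared
  have hAnorm : ∀ s, (A s).1^2 + (A s).2^2 = k2 s := by
    intro s
    have := curv_norm_sq hsmooth harc s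
    unfold dotp at this
    simp only [hk2, ← hτ, ← hA]
    nlinarith [this]
  -- pointwise bound on the left half
  have hptL : ∀ s ∈ Set.Icc a M, 1 - dotp (τ s) (τ M) ≤ (M - s) * Em / 2 := by
    intro s hs
    have hsM : s ≤ M := hs.2
    have has : a ≤ s := hs.1
    have hd1 : (∫ u in s..M, (A u).1) = (τ M).1 - (τ s).1 := ftc_fst τ hτd hAc s M
    have hd2 : (∫ u in s..M, (A u).2) = (τ M).2 - (τ s).2 := ftc_snd τ hτd hAc s M
    have hc1 : ((τ M).1 - (τ s).1)^2 ≤ (M - s) * ∫ u in s..M, ((A u).1)^2 := by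
      rw [← hd1]; exact cs_int _ hA1c hsM
    have hc2 : ((τ M).2 - (τ s).2)^2 ≤ (M - s) * ∫ u in s..M, ((A u).2)^2 := by
      rw [← hd2]; exact cs_int _ hA2c hsM
    have hsum : (∫ u in s..M, ((A u).1)^2) + (∫ u in s..M, ((A u).2)^2)
        = ∫ u in s..M, k2 u := by
      rw [← integral_add ((hA1c.fun_pow 2).intervalIntegrable s M) ((hA2c.fun_pow 2).intervalIntegrable s M)]
      exact integral_congr fun u _ => hAnorm u
    have hmono : (∫ u in s..M, k2 u) ≤ Em := by
      apply integral_mono_interval has hsM le_rfl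
      · filter_upwards with u using hk2nn u
      · exact hk2i a M
    have hu1 := harc s
    have hu2 := harc M
    unfold dotp at hu1 hu2 ⊢
    nlinarith [hc1, hc2, mul_le_mul_of_nonneg_left hmono (by linarith : (0:ℝ) ≤ M - s)]
  -- pointwise bound on the right half
  have hptR : ∀ s ∈ Set.Icc M b, 1 - dotp (τ s) (τ M) ≤ (s - M) * Ep / 2 := by
    intro s hs
    have hMs : M ≤ s := hs.1
    have hsb : s ≤ b := hs.2
    have hd1 : (∫ u in M..s, (A u).1) = (τ s).1 - (τ M).1 := ftc_fst τ hτd hAc M s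
    have hd2 : (∫ u in M..s, (A u).2) = (τ s).2 - (τ M).2 := ftc_snd τ hτd hAc M s
    have hc1 : ((τ s).1 - (τ M).1)^2 ≤ (s - M) * ∫ u in M..s, ((A u).1)^2 := by
      rw [← hd1]; exact cs_int _ hA1c hMs
    have hc2 : ((τ s).2 - (τ M).2)^2 ≤ (s - M) * ∫ u in M..s, ((A u).2)^2 := by
      rw [← hd2]; exact cs_int _ hA2c hMs
    have hsum : (∫ u in M..s, ((A u).1)^2) + (∫ u in M..s, ((A u).2)^2)
        = ∫ u in M..s, k2 u := by
      rw [← integral_add ((hA1c.fun_pow 2).intervalIntegrable M s) ((hA2c.fun_pow 2).intervalIntegrable M s)]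
      exact integral_congr fun u _ => hAnorm u
    have hmono : (∫ u in M..s, k2 u) ≤ Ep := by
      apply integral_mono_interval le_rfl hMs hsb
      · filter_upwards with u using hk2nn u
      · exact hk2i M b
    have hu1 := harc s
    have hu2 := harc M
    unfold dotp at hu1 hu2 ⊢
    nlinarith [hc1, hc2, mul_le_mul_of_nonneg_left hmono (by linarith : (0:ℝ) ≤ s - M)]
  -- continuity of the integrand
  have hdotc : Continuous fun s => dotp (τ s) (τ M) := by
    unfold dotp
    exact ((continuous_fst.comp hτc).mul continuous_const).add
      ((continuous_snd.comp hτc).mul continuous_const)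
  have hdc : Continuous fun s => 1 - dotp (τ s) (τ M) := continuous_const.sub hdotc
  -- total integral equals b - a
  have h2 : (∫ s in a..b, dotp (τ s) (τ M)) = 0 := by
    have e1 : (∫ s in a..b, (τ s).1) = (γ b).1 - (γ a).1 := ftc_fst γ hγd hτc a b
    have e2 : (∫ s in a..b, (τ s).2) = (γ b).2 - (γ a).2 := ftc_snd γ hγd hτc a b
    have i1 : IntervalIntegrable (fun s => (τ s).1 * (τ M).1) volume a b :=
      Continuous.intervalIntegrable (by fun_prop) a b
    have i2 : IntervalIntegrable (fun s => (τ s).2 * (τ M).2) volume a b :=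
      Continuous.intervalIntegrable (by fun_prop) a b
    have e3 : (∫ s in a..b, dotp (τ s) (τ M))
        = (∫ s in a..b, (τ s).1) * (τ M).1 + (∫ s in a..b, (τ s).2) * (τ M).2 := by
      unfold dotp
      rw [integral_add i1 i2, intervalIntegral.integral_mul_const, intervalIntegral.integral_mul_const]
    rw [e3, e1, e2, hloop]
    ring
  have htot : (∫ s in a..b, (1 - dotp (τ s) (τ M))) = b - a := by
    rw [integral_sub (intervalIntegrable_const) (hdotc.intervalIntegrable a b), h2]
    simp
  -- split the total integral
  have hsplit : (∫ s in a..b, (1 - dotp (τ s) (τ M)))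
      = (∫ s in a..M, (1 - dotp (τ s) (τ M))) + ∫ s in M..b, (1 - dotp (τ s) (τ M)) :=
    (integral_add_adjacent_intervals (hdc.intervalIntegrable a M)
      (hdc.intervalIntegrable M b)).symm
  -- bound left piece
  have hIL : (∫ s in a..M, (1 - dotp (τ s) (τ M))) ≤ (M - a)^2 / 2 * (Em / 2) := by
    have step1 : (∫ s in a..M, (1 - dotp (τ s) (τ M))) ≤ ∫ s in a..M, (M - s) * (Em / 2) := by
      apply integral_mono_on haM (hdc.intervalIntegrable a M)
        (Continuous.intervalIntegrable (by fun_prop) a M)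
      intro s hs
      linarith [hptL s hs]
    have step2 : (∫ s in a..M, (M - s) * (Em / 2)) = (M - a)^2/2 * (Em / 2) := by
      rw [intervalIntegral.integral_mul_const,
        integral_sub (Continuous.intervalIntegrable (by fun_prop : Continuous fun _ : ℝ => M) a M)
          (Continuous.intervalIntegrable (by fun_prop : Continuous fun s : ℝ => s) a M),
        integral_id, intervalIntegral.integral_const]
      simp only [smul_eq_mul]
      ring
    linarith [step1, step2.le, step2.ge]
  have hIR : (∫ s in M..b, (1 - dotp (τ s) (τ M))) ≤ (b - M)^2 / 2 * (Ep / 2) := by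
    have step1 : (∫ s in M..b, (1 - dotp (τ s) (τ M))) ≤ ∫ s in M..b, (s - M) * (Ep / 2) := by
      apply integral_mono_on hMb (hdc.intervalIntegrable M b)
        (Continuous.intervalIntegrable (by fun_prop) M b)
      intro s hs
      linarith [hptR s hs]
    have step2 : (∫ s in M..b, (s - M) * (Ep / 2)) = (b - M)^2/2 * (Ep / 2) := by
      rw [intervalIntegral.integral_mul_const,
        integral_sub (Continuous.intervalIntegrable (by fun_prop : Continuous fun s : ℝ => s) M b)
          (Continuous.intervalIntegrable (by fun_prop : Continuous fun _ : ℝ => M) M b),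
        integral_id, intervalIntegral.integral_const]
      simp only [smul_eq_mul]
      ring
    linarith [step1, step2.le, step2.ge]
  -- combine
  have hEmnn : 0 ≤ Em := integral_nonneg haM fun s _ => hk2nn s
  have hEpnn : 0 ≤ Ep := integral_nonneg hMb fun s _ => hk2nn s
  have hMa : M - a = (b - a) / 2 := by simp only [hM]; ring
  have hbM : b - M = (b - a) / 2 := by simp only [hM]; ring
  have hba : (∫ s in a..M, (1 - dotp (τ s) (τ M))) + (∫ s in M..b, (1 - dotp (τ s) (τ M)))
      = b - a := by rw [← hsplit, htot]
  have hfinal : b - a ≤ (b - a)^2 * (Em + Ep) / 16 := by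
    have h := add_le_add hIL hIR
    rw [hba] at h
    calc b - a ≤ (M - a)^2/2 * (Em/2) + (b - M)^2/2 * (Ep/2) := h
      _ = (b - a)^2 * (Em + Ep) / 16 := by rw [hMa, hbM]; ring
  rw [hEsplit]
  nlinarith [hfinal, hab, hEmnn, hEpnn]

/-- **Multiplicity bound via the oscillation of curvature** (Theorem 1.5):
for a smooth closed immersed arc-length parametrised plane curve of length `L`
with winding number `ω` and maximal multiplicity `m`,
`K_osc(γ) ≥ 16m² - 4ω²π²`. -/
theorem stmt_17
    (γ : ℝ → ℝ × ℝ) (L : ℝ) (hL : 0 < L)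
    (hsmooth : ContDiff ℝ (⊤ : ℕ∞) γ)
    (hper : ∀ s, γ (s + L) = γ s)
    (harc : ∀ s, dotp (deriv γ s) (deriv γ s) = 1)
    (ω : ℝ)
    (hω : (∫ s in (0:ℝ)..L, sCurv γ s) = 2 * ω * π)
    (m : ℕ)
    (hfin : ∀ x : ℝ × ℝ, {s ∈ Set.Ico 0 L | γ s = x}.Finite)
    (hm : IsGreatest {n : ℕ | ∃ x : ℝ × ℝ, n = ({s ∈ Set.Ico 0 L | γ s = x}).ncard} m) :
    L * (∫ s in (0:ℝ)..L, (sCurv γ s - (∫ u in (0:ℝ)..L, sCurv γ u) / L)^2)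
      ≥ 16 * (m : ℝ)^2 - 4 * ω^2 * π^2 := by
  have hkc : Continuous (sCurv γ) := curv_continuous hsmooth
  set k : ℝ → ℝ := sCurv γ with hk
  have hki : ∀ u v : ℝ, IntervalIntegrable k volume u v := fun u v => hkc.intervalIntegrable u v
  have hk2i : ∀ u v : ℝ, IntervalIntegrable (fun s => (k s)^2) volume u v :=
    fun u v => (hkc.pow 2).intervalIntegrable u v
  -- periodicity of curvature
  have hperτ : ∀ s, deriv γ (s + L) = deriv γ s := by
    intro s
    have h1 : (fun x => γ (x + L)) = γ := funext hper
    calc deriv γ (s + L) = deriv (fun x => γ (x + L)) s := (deriv_comp_add_const γ L s).symm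
      _ = deriv γ s := by rw [h1]
  have hperA : ∀ s, deriv (deriv γ) (s + L) = deriv (deriv γ) s := by
    intro s
    have h1 : (fun x => deriv γ (x + L)) = deriv γ := funext hperτ
    calc deriv (deriv γ) (s + L) = deriv (fun x => deriv γ (x + L)) s :=
        (deriv_comp_add_const (deriv γ) L s).symm
      _ = deriv (deriv γ) s := by rw [h1]
  have hperk2 : Function.Periodic (fun s => (k s)^2) L := by
    intro s
    simp only [hk, sCurv, sNu, dotp, perp, hperτ s, hperA s]
  -- step 1 : L * ∫ k² ≥ 16 m²
  have main : 16 * (m : ℝ)^2 ≤ L * ∫ s in (0:ℝ)..L, (k s)^2 := by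
    obtain ⟨x, hxm⟩ := hm.1
    have hSfin := hfin x
    have hm0 : 0 < m := by
      have h0mem : (0:ℝ) ∈ {s ∈ Set.Ico 0 L | γ s = γ 0} := ⟨⟨le_refl 0, hL⟩, rfl⟩
      have h1 : 0 < ({s ∈ Set.Ico 0 L | γ s = γ 0}).ncard :=
        (Set.ncard_pos (hfin (γ 0))).2 ⟨0, h0mem⟩
      exact lt_of_lt_of_le h1 (hm.2 ⟨γ 0, rfl⟩)
    have hcard : hSfin.toFinset.card = m := by
      rw [← Set.ncard_eq_toFinset_card _ hSfin, hxm]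
    set σ := hSfin.toFinset.orderIsoOfFin hcard with hσ
    set p : Fin m → ℝ := fun i => (σ i : ℝ) with hp
    have hpS : ∀ i, p i ∈ Set.Ico 0 L ∧ γ (p i) = x := by
      intro i
      have := (σ i).2
      rw [Set.Finite.mem_toFinset] at this
      exact this
    have hpmono : StrictMono p := fun i j hij => by
      simpa [hp, Subtype.coe_lt_coe] using σ.strictMono hij
    set P : ℕ → ℝ := fun i => if h : i < m then p ⟨i, h⟩ else p ⟨0, hm0⟩ + L with hP
    have hPlt : ∀ i (h : i < m), P i = p ⟨i, h⟩ := by intro i h; simp [hP, h]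
    have hPm : P m = p ⟨0, hm0⟩ + L := by simp [hP]
    have hPx : ∀ i ≤ m, γ (P i) = x := by
      intro i hi
      rcases lt_or_eq_of_le hi with h | h
      · have e1 : P i = p ⟨i, h⟩ := hPlt i h
        rw [e1]; exact (hpS _).2
      · subst h; rw [hPm, hper]; exact (hpS _).2
    have hPadj : ∀ i, i < m → P i < P (i + 1) := by
      intro i hi
      have e1 : P i = p ⟨i, hi⟩ := hPlt i hi
      rcases lt_or_eq_of_le (Nat.succ_le_of_lt hi) with h | h
      · have e2 : P (i+1) = p ⟨i+1, h⟩ := hPlt (i+1) h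
        rw [e1, e2]
        exact hpmono (by simp [Fin.lt_def])
      · have e2 : P (i+1) = p ⟨0, hm0⟩ + L := by
          simp only [hP]; rw [dif_neg (by omega : ¬ i + 1 < m)]
        rw [e1, e2]
        have h1 : p ⟨i, hi⟩ < L := ((hpS ⟨i, hi⟩).1).2
        have h2 : 0 ≤ p ⟨0, hm0⟩ := ((hpS ⟨0, hm0⟩).1).1
        linarith
    have hPmP0 : P m = P 0 + L := by rw [hPm, hPlt 0 hm0]
    -- sum of adjacent integrals
    have hsum : ∑ i ∈ Finset.range m, ∫ s in (P i)..(P (i + 1)), (k s)^2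
        = ∫ s in (P 0)..(P m), (k s)^2 :=
      intervalIntegral.sum_integral_adjacent_intervals (fun i _ => hk2i _ _)
    have hshift : (∫ s in (P 0)..(P m), (k s)^2) = ∫ s in (0:ℝ)..L, (k s)^2 := by
      rw [hPmP0]
      have := hperk2.intervalIntegral_add_eq (P 0) 0
      simpa using this
    -- telescoping sum of lengths
    have hlen : ∑ i ∈ Finset.range m, (P (i+1) - P i) = L := by
      rw [Finset.sum_range_sub (f := P), hPmP0]; ring
    -- per-loop inequality
    have hloopE : ∀ i ∈ Finset.range m,
        16 ≤ (P (i+1) - P i) * ∫ s in (P i)..(P (i + 1)), (k s)^2 := by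
      intro i hi
      rw [Finset.mem_range] at hi
      exact loop_ineq γ hsmooth harc (hPadj i hi)
        ((hPx i hi.le).trans ((hPx (i+1) (Nat.succ_le_of_lt hi)).symm))
    have hlpos : ∀ i ∈ Finset.range m, 0 < P (i+1) - P i := by
      intro i hi; rw [Finset.mem_range] at hi
      linarith [hPadj i hi]
    -- Cauchy–Schwarz over the loops
    have hCS : (m : ℝ)^2 ≤ (∑ i ∈ Finset.range m, (P (i+1) - P i))
        * ∑ i ∈ Finset.range m, (1 / (P (i+1) - P i)) := by
      have := Finset.sum_sq_le_sum_mul_sum_of_sq_eq_mul (Finset.range m)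
        (r := fun _ => (1:ℝ)) (f := fun i => P (i+1) - P i)
        (g := fun i => 1 / (P (i+1) - P i))
        (fun i hi => (hlpos i hi).le)
        (fun i hi => le_of_lt (one_div_pos.2 (hlpos i hi)))
        (fun i hi => by rw [one_pow, mul_one_div, div_self (ne_of_gt (hlpos i hi))])
      simpa using this
    have hE16 : ∀ i ∈ Finset.range m,
        16 / (P (i+1) - P i) ≤ ∫ s in (P i)..(P (i + 1)), (k s)^2 := by
      intro i hi
      rw [div_le_iff₀ (hlpos i hi)]
      linarith [hloopE i hi, mul_comm (P (i+1) - P i) (∫ s in (P i)..(P (i + 1)), (k s)^2)]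
    calc 16 * (m:ℝ)^2
        ≤ 16 * ((∑ i ∈ Finset.range m, (P (i+1) - P i))
            * ∑ i ∈ Finset.range m, (1 / (P (i+1) - P i))) := by nlinarith [hCS]
      _ = L * ∑ i ∈ Finset.range m, (16 / (P (i+1) - P i)) := by
          have haux : ∑ i ∈ Finset.range m, (16 / (P (i+1) - P i))
              = 16 * ∑ i ∈ Finset.range m, (1 / (P (i+1) - P i)) := by
            rw [Finset.mul_sum]
            exact Finset.sum_congr rfl fun i _ => by ring
          rw [hlen, haux]
          ring
      _ ≤ L * ∑ i ∈ Finset.range m, ∫ s in (P i)..(P (i + 1)), (k s)^2 := by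
          apply mul_le_mul_of_nonneg_left _ hL.le
          exact Finset.sum_le_sum hE16
      _ = L * ∫ s in (0:ℝ)..L, (k s)^2 := by rw [hsum, hshift]
  -- step 2 : expand the square
  set I : ℝ := ∫ s in (0:ℝ)..L, k s with hI
  set c : ℝ := I / L with hc
  have hexp : (∫ s in (0:ℝ)..L, (k s - c)^2)
      = (∫ s in (0:ℝ)..L, (k s)^2) - 2 * c * I + L * c^2 := by
    have h1 : (fun s => (k s - c)^2)
        = fun s => ((k s)^2 - 2 * c * k s) + c^2 := by funext s; ring
    rw [h1, integral_add ((hk2i 0 L).sub ((hki 0 L).const_mul _)) intervalIntegrable_const,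
      integral_sub (hk2i 0 L) ((hki 0 L).const_mul _), intervalIntegral.integral_const_mul,
      intervalIntegral.integral_const]
    simp only [smul_eq_mul, ← hI]
    ring
  have hLI : L * (∫ s in (0:ℝ)..L, (k s - c)^2)
      = L * (∫ s in (0:ℝ)..L, (k s)^2) - I^2 := by
    rw [hexp, hc]
    field_simp
    ring
  have hI2 : I^2 = 4 * ω^2 * π^2 := by rw [hω]; ring
  calc L * (∫ s in (0:ℝ)..L, (k s - I / L)^2)
      = L * (∫ s in (0:ℝ)..L, (k s)^2) - I^2 := hLI
    _ ≥ 16 * (m:ℝ)^2 - 4 * ω^2 * π^2 := by rw [hI2]; linarith [main]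

end
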